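/- The subsequence of a balanced parenthesis sequence obtained by keeping only the parentheses belonging to a subset M of nodes of the encoded tree is itself balanced, and for marked nodes u, v, the pair of u encloses the pair of v in the restricted sequence if and only if u is an ancestor of v in the original tree. -/

import Mathlib

/-- Finite rooted ordered trees. -/
inductive RTree where
  | node : List RTree → RTree

/-- Balanced-parentheses encoding via DFS: `true` = '(' on entering a node,
`false` = ')' on leaving it. -/
def RTree.enc : RTree → List Bool
  | .node ts => true :: (ts.attach.map (fun c => RTree.enc c.1)).flatten ++ [false]
decreasing_by
  simp only [RTree.node.sizeOf_spec]
  have := List.sizeOf_lt_of_mem c.2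
  omega

/-- The subtree at a path of child indices (if it exists). -/
def RTree.subtreeAt : RTree → List ℕ → Option RTree
  | t, [] => some t
  | .node ts, i :: p =>
    match ts[i]? with
    | some c => RTree.subtreeAt c p
    | none => none

/-- The path `p` identifies a node of the tree `t`. -/
def RTree.Valid (t : RTree) (p : List ℕ) : Prop := (t.subtreeAt p).isSome

/-- Position of the opening parenthesis of the node at path `p` in `t.enc`. -/
def RTree.openPos : RTree → List ℕ → Option ℕ
  | _, [] => some 0
  | .node ts, i :: p =>
    (ts[i]?).bind fun c =>
      (RTree.openPos c p).map fun k =>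
        1 + (((ts.take i).map (fun s => s.enc.length)).sum) + k

/-- Position of the closing parenthesis of the node at path `p` in `t.enc`. -/
def RTree.closePos (t : RTree) (p : List ℕ) : Option ℕ :=
  (t.openPos p).bind fun o => (t.subtreeAt p).map fun s => o + s.enc.length - 1

/-- A sequence of parentheses (`true` = '(', `false` = ')') is balanced:
every prefix has at least as many '(' as ')' and the total counts are equal. -/
def BalancedBP (l : List Bool) : Prop :=
  (∀ pre : List Bool, pre <+: l → pre.count false ≤ pre.count true) ∧
    l.count true = l.count false

/-- `u` is a (proper) ancestor of `v`: the path `u` is a proper prefix of the path `v`. -/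
def StrictAnc (u v : List ℕ) : Prop := u <+: v ∧ u ≠ v

open scoped Classical

/-- `i` is a parenthesis position (in `t.enc`) belonging to a marked node. -/
def MarkedPos (t : RTree) (Marked : List ℕ → Prop) (i : ℕ) : Prop :=
  ∃ p : List ℕ, t.Valid p ∧ Marked p ∧ (t.openPos p = some i ∨ t.closePos p = some i)

/-- The subsequence of `t.enc` keeping only the parentheses of marked nodes. -/
noncomputable def restrictedBP (t : RTree) (Marked : List ℕ → Prop) : List Bool :=
  t.enc.zipIdx.filterMap fun ib => if MarkedPos t Marked ib.2 then some ib.1 else none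

/-- Position in the restricted sequence of the parenthesis at position `i` of `t.enc`:
the number of marked parenthesis positions strictly before `i`. -/
noncomputable def posInRestricted (t : RTree) (Marked : List ℕ → Prop) (i : ℕ) : ℕ :=
  ((Finset.range i).filter fun j => MarkedPos t Marked j).card



lemma enc_node (ts : List RTree) :
    (RTree.node ts).enc = true :: (ts.map RTree.enc).flatten ++ [false] := by
  rw [RTree.enc]; congr 1; simp

lemma enc_length_ge (t : RTree) : 2 ≤ t.enc.length := by
  cases t with
  | node ts => rw [enc_node]; simp

lemma flatten_getElem {α} (L : List (List α)) (i k : ℕ) (x : List α) (h : L[i]? = some x)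
    (hk : k < x.length) :
    (L.flatten)[((L.take i).map List.length).sum + k]? = x[k]? := by
  induction L generalizing i with
  | nil => simp at h
  | cons a L ih =>
    cases i with
    | zero =>
      simp only [List.getElem?_cons_zero, Option.some.injEq] at h; subst h
      simp only [List.take_zero, List.map_nil, List.sum_nil, Nat.zero_add,
        List.flatten_cons]
      rw [List.getElem?_append, if_pos hk]
    | succ i =>
      simp only [List.getElem?_cons_succ] at h
      have := ih i h
      simp only [List.take_succ_cons, List.map_cons, List.sum_cons, List.flatten_cons]
      rw [List.getElem?_append_right (by omega)]
      rw [show a.length + (((L.take i).map List.length).sum) + k - a.length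
          = ((L.take i).map List.length).sum + k by omega]
      exact this

lemma sum_take_le {α} (ts : List α) (f : α → ℕ) (n : ℕ) :
    ((ts.take n).map f).sum ≤ (ts.map f).sum := by
  induction ts generalizing n with
  | nil => simp
  | cons a ts ih =>
    cases n with
    | zero => simp
    | succ n => simp only [List.take_succ_cons, List.map_cons, List.sum_cons]
                exact Nat.add_le_add_left (ih n) _

lemma sum_take_get {α} (ts : List α) (f : α → ℕ) (i : ℕ) (x : α) (h : ts[i]? = some x) :
    ((ts.take (i+1)).map f).sum = ((ts.take i).map f).sum + f x := by
  induction ts generalizing i with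
  | nil => simp at h
  | cons a ts ih =>
    cases i with
    | zero => simp at h; subst h; simp
    | succ i =>
      simp only [List.getElem?_cons_succ] at h
      simp only [List.take_succ_cons, List.map_cons, List.sum_cons, ih i h]
      omega

lemma key (p : List ℕ) (t s : RTree) (h : t.subtreeAt p = some s) :
    ∃ o, t.openPos p = some o ∧
      o + s.enc.length ≤ t.enc.length ∧
      (∀ k, k < s.enc.length → t.enc[o + k]? = s.enc[k]?) ∧
      (p ≠ [] → 1 ≤ o ∧ o + s.enc.length + 1 ≤ t.enc.length) := by
  induction p generalizing t s with
  | nil =>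
    simp only [RTree.subtreeAt, Option.some.injEq] at h; subst h
    exact ⟨0, by simp [RTree.openPos], by omega, fun k _ => by simp,
      fun h => absurd rfl h⟩
  | cons i q ih =>
    obtain ⟨ts⟩ := t
    simp only [RTree.subtreeAt] at h
    cases hx : ts[i]? with
    | none => rw [hx] at h; simp at h
    | some x =>
      rw [hx] at h
      obtain ⟨o', ho', hle', hget', _⟩ := ih x s h
      set S := ((ts.take i).map (fun s => s.enc.length)).sum with hS
      have hme : (List.map List.length (List.map RTree.enc ts)).sum
          = (List.map (fun s => s.enc.length) ts).sum := by
        simp [List.map_map, Function.comp_def]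
      have hsum : S + x.enc.length ≤ (List.map (fun s => s.enc.length) ts).sum := by
        have h3 := sum_take_get ts (fun s => s.enc.length) i x hx
        have h2 := sum_take_le ts (fun s => s.enc.length) (i+1)
        omega
      have hlen : (RTree.node ts).enc.length
          = 2 + (List.map (fun s => s.enc.length) ts).sum := by
        rw [enc_node]
        simp only [List.length_cons, List.length_append, List.length_flatten,
          List.length_nil, hme]
        omega
      have hsx : 2 ≤ s.enc.length := enc_length_ge s
      refine ⟨1 + S + o', ?_, by omega, ?_, fun _ => ⟨by omega, by omega⟩⟩
      · simp [RTree.openPos, hx, ho']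
        rw [← List.map_take]
      · intro k hk
        have hkx : o' + k < x.enc.length := by omega
        have hflat := flatten_getElem (ts.map RTree.enc) i (o' + k) x.enc
          (by rw [List.getElem?_map, hx]; rfl) hkx
        have hSm : (List.map List.length ((List.map RTree.enc ts).take i)).sum = S := by
          rw [← List.map_take, List.map_map]
          simp [Function.comp_def, hS]
        rw [hSm] at hflat
        rw [enc_node, show 1 + S + o' + k = (S + (o' + k)) + 1 from by omega,
          List.getElem?_append_left (by
            simp only [List.length_cons, List.length_flatten, hme]; omega),
          List.getElem?_cons_succ, hflat]
        exact hget' k hk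

lemma subtreeAt_append (u : List ℕ) (t s : RTree) (h : t.subtreeAt u = some s)
    (w : List ℕ) : t.subtreeAt (u ++ w) = s.subtreeAt w := by
  induction u generalizing t with
  | nil => simp only [RTree.subtreeAt, Option.some.injEq] at h; subst h; simp
  | cons i q ih =>
    obtain ⟨ts⟩ := t
    simp only [RTree.subtreeAt, List.cons_append] at h ⊢
    cases hx : ts[i]? with
    | none => rw [hx] at h; simp at h
    | some x => rw [hx] at h; exact ih x h

lemma openPos_append (u : List ℕ) (t s : RTree) (h : t.subtreeAt u = some s)
    (ou : ℕ) (hou : t.openPos u = some ou) (w : List ℕ) :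
    t.openPos (u ++ w) = (s.openPos w).map (fun k => ou + k) := by
  induction u generalizing t ou with
  | nil =>
    simp only [RTree.subtreeAt, Option.some.injEq] at h; subst h
    simp only [RTree.openPos, Option.some.injEq] at hou; subst hou
    simp [Option.map_id']
  | cons i q ih =>
    obtain ⟨ts⟩ := t
    simp only [RTree.subtreeAt] at h
    rw [List.cons_append]
    simp only [RTree.openPos] at hou ⊢
    cases hx : ts[i]? with
    | none => rw [hx] at h; simp at h
    | some x =>
      rw [hx] at h hou
      have h' : x.subtreeAt q = some s := h
      simp only [Option.bind_some] at hou ⊢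
      cases hoq : x.openPos q with
      | none => rw [hoq] at hou; simp at hou
      | some oq =>
        rw [hoq] at hou
        simp at hou
        rw [ih x h' oq hoq]
        cases hw : s.openPos w with
        | none => simp
        | some k => simp [← hou]; omega

lemma pos_facts (p : List ℕ) (t s : RTree) (h : t.subtreeAt p = some s) :
    ∃ o, t.openPos p = some o ∧ t.closePos p = some (o + s.enc.length - 1) ∧
      o < o + s.enc.length - 1 ∧ o + s.enc.length - 1 < t.enc.length ∧
      t.enc[o]? = some true ∧ t.enc[o + s.enc.length - 1]? = some false := by
  obtain ⟨o, ho, hle, hget, _⟩ := key p t s h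
  have h2 := enc_length_ge s
  have h2t := enc_length_ge t
  refine ⟨o, ho, ?_, by omega, by omega, ?_, ?_⟩
  · simp [RTree.closePos, ho, h]
  · have := hget 0 (by omega)
    rw [Nat.add_zero] at this
    rw [this]
    obtain ⟨us⟩ := s
    rw [enc_node]
    simp
  · have := hget (s.enc.length - 1) (by omega)
    rw [show o + s.enc.length - 1 = o + (s.enc.length - 1) from by omega]
    rw [this]
    obtain ⟨us⟩ := s
    rw [enc_node]
    rw [show (true :: (List.map RTree.enc us).flatten ++ [false]).length - 1
        = (true :: (List.map RTree.enc us).flatten).length from by simp]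
    rw [List.getElem?_append_right (Nat.le_refl _)]
    simp

lemma nest (t : RTree) (u w : List ℕ) (hw : w ≠ []) (su sv : RTree)
    (hu : t.subtreeAt u = some su) (hv : t.subtreeAt (u ++ w) = some sv)
    (ou ov : ℕ) (hou : t.openPos u = some ou) (hov : t.openPos (u ++ w) = some ov) :
    ou < ov ∧ ov + sv.enc.length ≤ ou + su.enc.length - 1 := by
  rw [subtreeAt_append u t su hu w] at hv
  obtain ⟨o', ho', hle', _, hne⟩ := key w su sv hv
  obtain ⟨h1, h2⟩ := hne hw
  rw [openPos_append u t su hu ou hou w, ho'] at hov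
  simp at hov
  omega

lemma sum_take_mono {α} (ts : List α) (f : α → ℕ) {m n : ℕ} (h : m ≤ n) :
    ((ts.take m).map f).sum ≤ ((ts.take n).map f).sum := by
  have h1 := sum_take_le (ts.take n) f m
  rwa [List.take_take, min_eq_left h] at h1

lemma cons_valid (ts : List RTree) (i : ℕ) (p : List ℕ) (s : RTree)
    (h : (RTree.node ts).subtreeAt (i :: p) = some s) :
    ∃ x, ts[i]? = some x ∧ x.subtreeAt p = some s := by
  simp only [RTree.subtreeAt] at h
  cases hx : ts[i]? with
  | none => rw [hx] at h; simp at h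
  | some x => rw [hx] at h; exact ⟨x, rfl, h⟩

lemma cons_open (ts : List RTree) (i : ℕ) (p : List ℕ) (o : ℕ)
    (h : (RTree.node ts).openPos (i :: p) = some o) :
    ∃ x o', ts[i]? = some x ∧ x.openPos p = some o' ∧
      o = 1 + ((ts.take i).map (fun s => s.enc.length)).sum + o' := by
  simp only [RTree.openPos] at h
  cases hx : ts[i]? with
  | none => rw [hx] at h; simp at h
  | some x =>
    rw [hx] at h
    simp only [Option.bind_some] at h
    cases ho : x.openPos p with
    | none => rw [ho] at h; simp at h
    | some o' =>
      rw [ho] at h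
      simp only [Option.map_some, Option.some.injEq] at h
      exact ⟨x, o', by simp [hx], ho, h.symm⟩

lemma valid_prefix (u v : List ℕ) (t s : RTree) (h : t.subtreeAt (u ++ v) = some s) :
    ∃ r, t.subtreeAt u = some r := by
  induction u generalizing t with
  | nil => exact ⟨t, by simp [RTree.subtreeAt]⟩
  | cons i q ih =>
    rw [List.cons_append] at h
    obtain ⟨ts⟩ := t
    obtain ⟨x, hx, hs⟩ := cons_valid ts i (q ++ v) s h
    obtain ⟨r, hr⟩ := ih x hs
    refine ⟨r, ?_⟩
    simp only [RTree.subtreeAt, hx]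
    exact hr

lemma disj_root (ts : List RTree) (i j : ℕ) (a b : List ℕ) (hij : i < j)
    (s1 s2 : RTree)
    (h1 : (RTree.node ts).subtreeAt (i :: a) = some s1)
    (h2 : (RTree.node ts).subtreeAt (j :: b) = some s2)
    (o1 o2 : ℕ)
    (ho1 : (RTree.node ts).openPos (i :: a) = some o1)
    (ho2 : (RTree.node ts).openPos (j :: b) = some o2) :
    o1 + s1.enc.length ≤ o2 := by
  obtain ⟨x, hx, hxs⟩ := cons_valid ts i a s1 h1
  obtain ⟨x', oa, hx', hoa, ho1'⟩ := cons_open ts i a o1 ho1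
  rw [hx] at hx'; injection hx' with hx'; subst hx'
  obtain ⟨y, ob, hy, hob, ho2'⟩ := cons_open ts j b o2 ho2
  obtain ⟨oa', hoa', hle, _, _⟩ := key a x s1 hxs
  rw [hoa] at hoa'; injection hoa' with hoa'; subst hoa'
  have hstep := sum_take_get ts (fun s => s.enc.length) i x hx
  have hmono := sum_take_mono ts (fun s => s.enc.length) (show i + 1 ≤ j from hij)
  omega

lemma disj (t : RTree) (w : List ℕ) (i j : ℕ) (a b : List ℕ) (hij : i < j)
    (s1 s2 : RTree)
    (h1 : t.subtreeAt (w ++ i :: a) = some s1)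
    (h2 : t.subtreeAt (w ++ j :: b) = some s2)
    (o1 o2 : ℕ)
    (ho1 : t.openPos (w ++ i :: a) = some o1)
    (ho2 : t.openPos (w ++ j :: b) = some o2) :
    o1 + s1.enc.length ≤ o2 := by
  obtain ⟨sw, hsw⟩ := valid_prefix w _ t s1 h1
  obtain ⟨ow, how, _⟩ := key w t sw hsw
  rw [subtreeAt_append w t sw hsw] at h1 h2
  rw [openPos_append w t sw hsw ow how] at ho1 ho2
  obtain ⟨us⟩ := sw
  cases ha : (RTree.node us).openPos (i :: a) with
  | none => rw [ha] at ho1; simp at ho1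
  | some p1 =>
    cases hb : (RTree.node us).openPos (j :: b) with
    | none => rw [hb] at ho2; simp at ho2
    | some p2 =>
      rw [ha] at ho1; rw [hb] at ho2
      simp at ho1 ho2
      have := disj_root us i j a b hij s1 s2 h1 h2 p1 p2 ha hb
      omega

lemma common_prefix (u v : List ℕ) (h1 : ¬ u <+: v) (h2 : ¬ v <+: u) :
    ∃ w i j a b, i ≠ j ∧ u = w ++ i :: a ∧ v = w ++ j :: b := by
  induction u generalizing v with
  | nil => exact absurd (List.nil_prefix) h1
  | cons i a ih =>
    cases v with
    | nil => exact absurd (List.nil_prefix) h2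
    | cons j b =>
      by_cases hij : i = j
      · subst hij
        rw [List.cons_prefix_cons] at h1 h2
        obtain ⟨w, i', j', a', b', hne, ha', hb'⟩ :=
          ih b (fun hc => h1 ⟨rfl, hc⟩) (fun hc => h2 ⟨rfl, hc⟩)
        exact ⟨i :: w, i', j', a', b', hne, by simp [ha'], by simp [hb']⟩
      · exact ⟨[], i, j, a, b, hij, rfl, rfl⟩

lemma rel (t : RTree) (u v : List ℕ) (su sv : RTree)
    (hu : t.subtreeAt u = some su) (hv : t.subtreeAt v = some sv)
    (ou ov : ℕ) (hou : t.openPos u = some ou) (hov : t.openPos v = some ov)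
    (hne : u ≠ v) :
    (u <+: v ∧ ou < ov ∧ ov + sv.enc.length ≤ ou + su.enc.length - 1) ∨
    (v <+: u ∧ ov < ou ∧ ou + su.enc.length ≤ ov + sv.enc.length - 1) ∨
    (¬ u <+: v ∧ ¬ v <+: u ∧ (ou + su.enc.length ≤ ov ∨ ov + sv.enc.length ≤ ou)) := by
  by_cases huv : u <+: v
  · obtain ⟨w, rfl⟩ := huv
    have hw : w ≠ [] := by rintro rfl; simp at hne
    exact Or.inl ⟨⟨w, rfl⟩, nest t u w hw su sv hu hv ou ov hou hov⟩
  · by_cases hvu : v <+: u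
    · obtain ⟨w, rfl⟩ := hvu
      have hw : w ≠ [] := by rintro rfl; simp at hne
      have := nest t v w hw sv su hv hu ov ou hov hou
      exact Or.inr (Or.inl ⟨⟨w, rfl⟩, this⟩)
    · obtain ⟨w, i, j, a, b, hij, hu', hv'⟩ := common_prefix u v huv hvu
      subst hu'; subst hv'
      rcases Nat.lt_or_ge i j with h | h
      · exact Or.inr (Or.inr ⟨huv, hvu,
          Or.inl (disj t w i j a b h su sv hu hv ou ov hou hov)⟩)
      · have hji : j < i := lt_of_le_of_ne h (Ne.symm hij)
        exact Or.inr (Or.inr ⟨huv, hvu,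
          Or.inr (disj t w j i b a hji sv su hv hu ov ou hov hou)⟩)

lemma prefix_filterMap {α β} (f : α → Option β) (l : List α) (pre : List β)
    (h : pre <+: l.filterMap f) : ∃ l₁, l₁ <+: l ∧ pre = l₁.filterMap f := by
  induction l generalizing pre with
  | nil => simp only [List.filterMap_nil, List.prefix_nil] at h; exact ⟨[], by simp, by simp [h]⟩
  | cons a l ih =>
    rw [List.filterMap_cons] at h
    cases hfa : f a with
    | none =>
      rw [hfa] at h
      obtain ⟨l₁, hl₁, hpre⟩ := ih pre h
      exact ⟨a :: l₁, List.cons_prefix_cons.mpr ⟨rfl, hl₁⟩, by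
        rw [List.filterMap_cons, hfa]; exact hpre⟩
    | some b =>
      rw [hfa] at h
      cases pre with
      | nil => exact ⟨[], List.nil_prefix, by simp⟩
      | cons x pre' =>
        rw [List.cons_prefix_cons] at h
        obtain ⟨rfl, h⟩ := h
        obtain ⟨l₁, hl₁, hpre⟩ := ih pre' h
        exact ⟨a :: l₁, List.cons_prefix_cons.mpr ⟨rfl, hl₁⟩, by
          rw [List.filterMap_cons, hfa, hpre]⟩

lemma enumFrom_take {α} (l : List α) (k n : ℕ) :
    (l.zipIdx k).take n = (l.take n).zipIdx k := by
  induction l generalizing k n with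
  | nil => simp
  | cons a l ih =>
    cases n with
    | zero => simp
    | succ n => simp [List.zipIdx_cons, ih]

open scoped Classical in

lemma count_filterMap_enum (P : ℕ → Prop) (l : List Bool) (k : ℕ) (b : Bool) :
    ((l.zipIdx k).filterMap (fun ib => if P ib.2 then some ib.1 else none)).count b
      = ∑ j ∈ Finset.range l.length, if P (k + j) ∧ l[j]? = some b then 1 else 0 := by
  induction l generalizing k with
  | nil => simp
  | cons x l ih =>
    rw [List.zipIdx_cons, List.filterMap_cons, List.length_cons,
      Finset.sum_range_succ']
    have hrw : ∀ j, (if P (k + (j+1)) ∧ (x :: l)[j+1]? = some b then (1:ℕ) else 0)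
        = if P ((k+1) + j) ∧ l[j]? = some b then (1:ℕ) else 0 := by
      intro j
      rw [List.getElem?_cons_succ, show k + (j+1) = (k+1)+j from by omega]
    rw [Finset.sum_congr rfl (fun j _ => hrw j), ← ih (k+1)]
    by_cases hP : P k
    · simp only [if_pos hP, List.count_cons]
      simp only [List.getElem?_cons_zero, Nat.add_zero, hP, true_and,
        Option.some.injEq]
      rcases Bool.eq_or_eq_not x b with rfl | rfl <;> simp
    · simp only [if_neg hP, List.getElem?_cons_zero, Nat.add_zero, hP, false_and,
        if_false, Nat.add_zero]


lemma open_inj (t : RTree) (u v : List ℕ) (hu : t.Valid u) (hv : t.Valid v) (i : ℕ)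
    (h1 : t.openPos u = some i) (h2 : t.openPos v = some i) : u = v := by
  by_contra hne
  obtain ⟨su, hsu⟩ := Option.isSome_iff_exists.mp hu
  obtain ⟨sv, hsv⟩ := Option.isSome_iff_exists.mp hv
  have l1 := enc_length_ge su
  have l2 := enc_length_ge sv
  rcases rel t u v su sv hsu hsv i i h1 h2 hne with ⟨_, h, _⟩ | ⟨_, h, _⟩ | ⟨_, _, h | h⟩ <;> omega

lemma close_inj (t : RTree) (u v : List ℕ) (hu : t.Valid u) (hv : t.Valid v) (i : ℕ)
    (h1 : t.closePos u = some i) (h2 : t.closePos v = some i) : u = v := by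
  by_contra hne
  obtain ⟨su, hsu⟩ := Option.isSome_iff_exists.mp hu
  obtain ⟨sv, hsv⟩ := Option.isSome_iff_exists.mp hv
  have l1 := enc_length_ge su
  have l2 := enc_length_ge sv
  obtain ⟨ou, hou, hcu, _, _, _, _⟩ := pos_facts u t su hsu
  obtain ⟨ov, hov, hcv, _, _, _, _⟩ := pos_facts v t sv hsv
  rw [h1] at hcu; rw [h2] at hcv
  injection hcu with hcu; injection hcv with hcv
  rcases rel t u v su sv hsu hsv ou ov hou hov hne with ⟨_, h, h'⟩ | ⟨_, h, h'⟩ | ⟨_, _, h | h⟩ <;> omega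

lemma open_true (t : RTree) (p : List ℕ) (hp : t.Valid p) (i : ℕ)
    (h : t.openPos p = some i) : t.enc[i]? = some true := by
  obtain ⟨s, hs⟩ := Option.isSome_iff_exists.mp hp
  obtain ⟨o, ho, _, _, _, ht, _⟩ := pos_facts p t s hs
  rw [h] at ho; injection ho with ho; rw [ho]; exact ht

lemma close_false (t : RTree) (p : List ℕ) (hp : t.Valid p) (i : ℕ)
    (h : t.closePos p = some i) : t.enc[i]? = some false := by
  obtain ⟨s, hs⟩ := Option.isSome_iff_exists.mp hp
  obtain ⟨o, ho, hc, _, _, _, hf⟩ := pos_facts p t s hs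
  rw [h] at hc; injection hc with hc; rw [hc]; exact hf

lemma close_of_marked (t : RTree) (Marked : List ℕ → Prop) (j : ℕ)
    (h : MarkedPos t Marked j) (henc : t.enc[j]? = some false) :
    ∃ p, t.Valid p ∧ Marked p ∧ t.closePos p = some j := by
  obtain ⟨p, hv, hm, ho | hc⟩ := h
  · rw [open_true t p hv j ho] at henc; simp at henc
  · exact ⟨p, hv, hm, hc⟩

lemma open_of_marked (t : RTree) (Marked : List ℕ → Prop) (j : ℕ)
    (h : MarkedPos t Marked j) (henc : t.enc[j]? = some true) :
    ∃ p, t.Valid p ∧ Marked p ∧ t.openPos p = some j := by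
  obtain ⟨p, hv, hm, ho | hc⟩ := h
  · exact ⟨p, hv, hm, ho⟩
  · rw [close_false t p hv j hc] at henc; simp at henc

/-- map a close position to the matching open position -/
noncomputable def cl2op (t : RTree) (Marked : List ℕ → Prop) (j : ℕ) : ℕ :=
  if h : ∃ p, t.Valid p ∧ Marked p ∧ t.closePos p = some j then
    (t.openPos h.choose).getD 0 else 0

/-- map an open position to the matching close position -/
noncomputable def op2cl (t : RTree) (Marked : List ℕ → Prop) (j : ℕ) : ℕ :=
  if h : ∃ p, t.Valid p ∧ Marked p ∧ t.openPos p = some j then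
    (t.closePos h.choose).getD 0 else 0

lemma cl2op_spec (t : RTree) (Marked : List ℕ → Prop) (j : ℕ)
    (h : ∃ p, t.Valid p ∧ Marked p ∧ t.closePos p = some j) :
    ∃ p, t.Valid p ∧ Marked p ∧ t.closePos p = some j ∧
      t.openPos p = some (cl2op t Marked j) ∧ cl2op t Marked j < j := by
  obtain ⟨hv, hm, hc⟩ := h.choose_spec
  obtain ⟨s, hs⟩ := Option.isSome_iff_exists.mp hv
  obtain ⟨o, ho, hc', hlt, _, _, _⟩ := pos_facts h.choose t s hs
  rw [hc] at hc'; injection hc' with hc'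
  refine ⟨h.choose, hv, hm, hc, ?_, ?_⟩
  · rw [cl2op, dif_pos h, ho]; rfl
  · rw [cl2op, dif_pos h, ho]; simp [Option.getD]; omega

lemma op2cl_spec (t : RTree) (Marked : List ℕ → Prop) (j : ℕ)
    (h : ∃ p, t.Valid p ∧ Marked p ∧ t.openPos p = some j) :
    ∃ p, t.Valid p ∧ Marked p ∧ t.openPos p = some j ∧
      t.closePos p = some (op2cl t Marked j) ∧ j < op2cl t Marked j ∧
      op2cl t Marked j < t.enc.length := by
  obtain ⟨hv, hm, ho⟩ := h.choose_spec
  obtain ⟨s, hs⟩ := Option.isSome_iff_exists.mp hv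
  obtain ⟨o, ho', hc', hlt, hln, _, _⟩ := pos_facts h.choose t s hs
  rw [ho] at ho'; injection ho' with ho'; subst ho'
  refine ⟨h.choose, hv, hm, ho, ?_, ?_, ?_⟩
  · rw [op2cl, dif_pos h, hc']; rfl
  · rw [op2cl, dif_pos h, hc']; simp [Option.getD]; omega
  · rw [op2cl, dif_pos h, hc']; simp [Option.getD]; omega

open scoped Classical in
lemma NB_le (t : RTree) (Marked : List ℕ → Prop) (n : ℕ) :
    ((Finset.range n).filter
        (fun j => MarkedPos t Marked j ∧ t.enc[j]? = some false)).card
      ≤ ((Finset.range n).filter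
        (fun j => MarkedPos t Marked j ∧ t.enc[j]? = some true)).card := by
  apply Finset.card_le_card_of_injOn (cl2op t Marked)
  · intro j hj
    simp only [Finset.mem_coe, Finset.mem_filter, Finset.mem_range] at hj ⊢
    obtain ⟨hjn, hmk, henc⟩ := hj
    obtain ⟨p, hv, hm, hc, ho, hlt⟩ :=
      cl2op_spec t Marked j (close_of_marked t Marked j hmk henc)
    exact ⟨by omega, ⟨p, hv, hm, Or.inl ho⟩, open_true t p hv _ ho⟩
  · intro j1 h1 j2 h2 heq
    simp only [Finset.coe_filter, Set.mem_setOf_eq, Finset.mem_range] at h1 h2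
    obtain ⟨p1, hv1, hm1, hc1, ho1, _⟩ :=
      cl2op_spec t Marked j1 (close_of_marked t Marked j1 h1.2.1 h1.2.2)
    obtain ⟨p2, hv2, hm2, hc2, ho2, _⟩ :=
      cl2op_spec t Marked j2 (close_of_marked t Marked j2 h2.2.1 h2.2.2)
    rw [heq] at ho1
    have := open_inj t p1 p2 hv1 hv2 _ ho1 ho2
    subst this
    rw [hc1] at hc2; injection hc2

open scoped Classical in
lemma NB_eq (t : RTree) (Marked : List ℕ → Prop) :
    ((Finset.range t.enc.length).filter
        (fun j => MarkedPos t Marked j ∧ t.enc[j]? = some true)).card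
      = ((Finset.range t.enc.length).filter
        (fun j => MarkedPos t Marked j ∧ t.enc[j]? = some false)).card := by
  apply Finset.card_bij' (fun a _ => op2cl t Marked a) (fun a _ => cl2op t Marked a)
  · intro a ha
    simp only [Finset.mem_filter, Finset.mem_range] at ha ⊢
    obtain ⟨p, hv, hm, ho, hc, hlt, hln⟩ :=
      op2cl_spec t Marked a (open_of_marked t Marked a ha.2.1 ha.2.2)
    exact ⟨hln, ⟨p, hv, hm, Or.inr hc⟩, close_false t p hv _ hc⟩
  · intro a ha
    simp only [Finset.mem_filter, Finset.mem_range] at ha ⊢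
    obtain ⟨p, hv, hm, hc, ho, hlt⟩ :=
      cl2op_spec t Marked a (close_of_marked t Marked a ha.2.1 ha.2.2)
    exact ⟨by omega, ⟨p, hv, hm, Or.inl ho⟩, open_true t p hv _ ho⟩
  · intro a ha
    simp only [Finset.mem_filter, Finset.mem_range] at ha
    obtain ⟨p, hv, hm, ho, hc, _, _⟩ :=
      op2cl_spec t Marked a (open_of_marked t Marked a ha.2.1 ha.2.2)
    obtain ⟨q, hvq, hmq, hcq, hoq, _⟩ :=
      cl2op_spec t Marked (op2cl t Marked a)
        ⟨p, hv, hm, hc⟩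
    have := close_inj t q p hvq hv _ hcq hc
    subst this
    rw [ho] at hoq; injection hoq with hoq; exact hoq.symm
  · intro a ha
    simp only [Finset.mem_filter, Finset.mem_range] at ha
    obtain ⟨p, hv, hm, hc, ho, _⟩ :=
      cl2op_spec t Marked a (close_of_marked t Marked a ha.2.1 ha.2.2)
    obtain ⟨q, hvq, hmq, hoq, hcq, _, _⟩ :=
      op2cl_spec t Marked (cl2op t Marked a)
        ⟨p, hv, hm, ho⟩
    have := open_inj t q p hvq hv _ hoq ho
    subst this
    rw [hc] at hcq; injection hcq with hcq; exact hcq.symm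

open scoped Classical in
lemma count_restricted_take (t : RTree) (Marked : List ℕ → Prop) (m : ℕ) (b : Bool) :
    (((t.enc.take m).zipIdx 0).filterMap
        (fun ib => if MarkedPos t Marked ib.2 then some ib.1 else none)).count b
      = ((Finset.range (min m t.enc.length)).filter
          (fun j => MarkedPos t Marked j ∧ t.enc[j]? = some b)).card := by
  rw [count_filterMap_enum, Finset.card_filter,
    show (t.enc.take m).length = min m t.enc.length from by simp]
  apply Finset.sum_congr rfl
  intro j hj
  simp only [Finset.mem_range] at hj
  obtain ⟨hj1, hj2⟩ := lt_min_iff.mp hj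
  rw [Nat.zero_add, List.getElem?_take, if_pos hj1]

lemma posInRestricted_le (t : RTree) (Marked : List ℕ → Prop) {i j : ℕ} (h : i ≤ j) :
    posInRestricted t Marked i ≤ posInRestricted t Marked j := by
  apply Finset.card_le_card
  apply Finset.filter_subset_filter
  intro x hx
  simp only [Finset.mem_range] at hx ⊢
  omega

lemma posInRestricted_lt (t : RTree) (Marked : List ℕ → Prop) {i j : ℕ}
    (h : i < j) (hm : MarkedPos t Marked i) :
    posInRestricted t Marked i < posInRestricted t Marked j := by
  apply Finset.card_lt_card
  rw [Finset.ssubset_iff_of_subset (Finset.filter_subset_filter _ (by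
    intro x hx
    simp only [Finset.mem_range] at hx ⊢
    omega))]
  exact ⟨i, by simp [h, hm], by simp⟩


/-- The subsequence of a balanced-parentheses tree encoding keeping only the
parentheses of a subset `Marked` of nodes is itself balanced, and for marked
nodes `u, v`, the pair of `u` encloses the pair of `v` in the restricted
sequence iff `u` is a (proper) ancestor of `v` in the original tree. -/
theorem restricted_bp_balanced_and_enclose_iff_ancestor
    (t : RTree) (Marked : List ℕ → Prop) :
    BalancedBP (restrictedBP t Marked) ∧
    ∀ (u v : List ℕ), t.Valid u → t.Valid v → Marked u → Marked v →
      ∀ ou cu ov cv : ℕ,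
        t.openPos u = some ou → t.closePos u = some cu →
        t.openPos v = some ov → t.closePos v = some cv →
        ((posInRestricted t Marked ou < posInRestricted t Marked ov ∧
          posInRestricted t Marked cv < posInRestricted t Marked cu) ↔
          StrictAnc u v) := by
  constructor
  · constructor
    · intro pre hpre
      simp only [restrictedBP] at hpre
      obtain ⟨l₁, hl₁, rfl⟩ := prefix_filterMap _ _ _ hpre
      have hl := List.prefix_iff_eq_take.mp hl₁
      rw [show t.enc.zipIdx = t.enc.zipIdx 0 from rfl, enumFrom_take] at hl
      rw [hl, count_restricted_take, count_restricted_take]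
      exact NB_le t Marked _
    · have he : t.enc.zipIdx = (t.enc.take t.enc.length).zipIdx 0 := by
        rw [List.take_length]
      simp only [restrictedBP]
      rw [he, count_restricted_take, count_restricted_take, min_self]
      exact NB_eq t Marked
  · intro u v hvu hvv hmu hmv ou cu ov cv hou hcu hov hcv
    obtain ⟨su, hsu⟩ := Option.isSome_iff_exists.mp hvu
    obtain ⟨sv, hsv⟩ := Option.isSome_iff_exists.mp hvv
    have hlu := enc_length_ge su
    have hlv := enc_length_ge sv
    obtain ⟨ou', hou', hcu', hltu, hlnu, _, _⟩ := pos_facts u t su hsu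
    rw [hou] at hou'; injection hou' with e; subst e
    rw [hcu] at hcu'; injection hcu' with ecu
    obtain ⟨ov', hov', hcv', hltv, hlnv, _, _⟩ := pos_facts v t sv hsv
    rw [hov] at hov'; injection hov' with e; subst e
    rw [hcv] at hcv'; injection hcv' with ecv
    constructor
    · rintro ⟨h1, h2⟩
      have hoo : ou < ov := by
        by_contra hc
        have := posInRestricted_le t Marked (show ov ≤ ou by omega)
        omega
      have hcc : cv < cu := by
        by_contra hc
        have := posInRestricted_le t Marked (show cu ≤ cv by omega)
        omega
      have hne : u ≠ v := by
        rintro rfl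
        rw [hou] at hov; injection hov with e; omega
      rcases rel t u v su sv hsu hsv ou ov hou hov hne with
        ⟨hp, _, _⟩ | ⟨hp, hlt2, hle2⟩ | ⟨_, _, h | h⟩
      · exact ⟨hp, hne⟩
      · omega
      · omega
      · omega
    · rintro ⟨hpre, hne⟩
      obtain ⟨w, rfl⟩ := hpre
      have hw : w ≠ [] := by rintro rfl; simp at hne
      have hn := nest t u w hw su sv hsu hsv ou ov hou hov
      exact ⟨posInRestricted_lt t Marked (by omega) ⟨u, hvu, hmu, Or.inl hou⟩,
        posInRestricted_lt t Marked (by omega) ⟨u ++ w, hvv, hmv, Or.inr hcv⟩⟩
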